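/- Let λ > 0, 0 < T₀⁻ < T_q < T₀⁺ with g(T₀⁺) = g(T₀⁻) where g(T) := T − T_q log T, and let T^±(t) := T_q + (T₀^± − T_q) e^{−λ t}, a := T₀⁺ − T_q, b := T_q − T₀⁻. Then there is exactly one time t* > 0 with T⁺(t*) · T⁻(t*) = T_q², namely t* = (1/λ) · log(a b / (T_q (a − b))); in particular a > b and 0 < T_q(a − b) < a b, so t* is well defined and positive. -/

import Mathlib

open Real Set

lemma lemA : ∀ y : ℝ, 1 < y → 2 * Real.log y < y - 1/y := by
  intro y hy
  have key : StrictMonoOn (fun y : ℝ => y - 1/y - 2 * Real.log y) (Set.Ici 1) := by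
    apply strictMonoOn_of_deriv_pos (convex_Ici 1)
    · apply ContinuousOn.sub
      · apply ContinuousOn.sub continuousOn_id
        exact continuousOn_const.div continuousOn_id (fun x hx => by
          have : (1:ℝ) ≤ x := hx; linarith)
      · exact continuousOn_const.mul (Real.continuousOn_log.mono (fun x hx => by
          have : (1:ℝ) ≤ x := hx; simp; linarith))
    · intro x hx
      rw [interior_Ici] at hx
      have hx1 : (1:ℝ) < x := hx
      have hx0 : x ≠ 0 := by linarith
      have h1 : HasDerivAt (fun y : ℝ => y - 1/y - 2 * Real.log y)
          (1 - (-(1/x^2)) - 2 * (1/x)) x := by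
        have := ((hasDerivAt_id x).sub ((hasDerivAt_inv hx0))).sub
          ((Real.hasDerivAt_log hx0).const_mul 2)
        convert this using 1
        · rfl
        · rfl
        · ext z; simp
        · simp [one_div]
      rw [h1.deriv]
      have : 1 - (-(1/x^2)) - 2 * (1/x) = ((x-1)/x)^2 := by
        field_simp; ring
      rw [this]
      have : 0 < (x-1)/x := div_pos (by linarith) (by linarith)
      exact pow_pos this 2
  have := key (Set.self_mem_Ici) (Set.mem_Ici.mpr hy.le) hy
  simp only [Real.log_one, one_div] at this ⊢
  norm_num at this
  linarith

lemma lemB : ∀ x : ℝ, 1 < x → 2*(x-1)/(x+1) < Real.log x := by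
  intro x hx
  have key : StrictMonoOn (fun x : ℝ => Real.log x - 2*(x-1)/(x+1)) (Set.Ici 1) := by
    apply strictMonoOn_of_deriv_pos (convex_Ici 1)
    · apply ContinuousOn.sub
      · exact Real.continuousOn_log.mono (fun x hx => by
          have h1 : (1:ℝ) ≤ x := hx
          simp only [Set.mem_compl_iff, Set.mem_singleton_iff]
          intro h; rw [h] at h1; linarith)
      · exact (continuousOn_const.mul (continuousOn_id.sub continuousOn_const)).div
          (continuousOn_id.add continuousOn_const) (fun x hx => by
          have h1 : (1:ℝ) ≤ x := hx
          exact ne_of_gt (by linarith))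
    · intro x hx
      rw [interior_Ici] at hx
      have hx1 : (1:ℝ) < x := hx
      have hx0 : x ≠ 0 := by linarith
      have hx1' : x + 1 ≠ 0 := by linarith
      have h1 : HasDerivAt (fun x : ℝ => Real.log x - 2*(x-1)/(x+1))
          (1/x - (2*(x+1) - 2*(x-1)*1)/(x+1)^2) x := by
        have hd : HasDerivAt (fun x : ℝ => 2*(x-1)/(x+1))
            ((2*(x+1) - 2*(x-1)*1)/(x+1)^2) x := by
          have hn : HasDerivAt (fun x : ℝ => 2*(x-1)) 2 x := by
            simpa using ((hasDerivAt_id x).sub_const 1).const_mul 2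
          have hdd : HasDerivAt (fun x : ℝ => x+1) 1 x := (hasDerivAt_id x).add_const 1
          have := hn.div hdd hx1'
          exact this
        have := (Real.hasDerivAt_log hx0).sub hd
        simpa [one_div, Pi.sub_def] using this
      rw [h1.deriv]
      have : 1/x - (2*(x+1) - 2*(x-1)*1)/(x+1)^2 = (x-1)^2/(x*(x+1)^2) := by
        field_simp; ring
      rw [this]
      have h2 : 0 < (x-1)^2 := pow_pos (by linarith) 2
      positivity
  have := key (Set.self_mem_Ici) (Set.mem_Ici.mpr hx.le) hx
  simp at this
  linarith

set_option maxHeartbeats 800000 in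
/-- For thermodynamically equidistant initial temperatures, there is exactly one time
`t* > 0` with `T⁺(t*) T⁻(t*) = T_q²`, namely `t* = (1/λ) log(ab/(T_q(a−b)))` with
`a = T₀⁺ − T_q` and `b = T_q − T₀⁻`; in particular `a > b` and
`0 < T_q(a−b) < ab`. -/
theorem unique_critical_time
    (lam Tq T0m T0p : ℝ) (hlam : 0 < lam)
    (hT0m : 0 < T0m) (hTm : T0m < Tq) (hTp : Tq < T0p)
    (heq : T0p - Tq * Real.log T0p = T0m - Tq * Real.log T0m)
    (Tp Tm : ℝ → ℝ)
    (hTpdef : ∀ t, Tp t = Tq + (T0p - Tq) * Real.exp (-lam * t))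
    (hTmdef : ∀ t, Tm t = Tq + (T0m - Tq) * Real.exp (-lam * t))
    (a b : ℝ) (ha : a = T0p - Tq) (hb : b = Tq - T0m)
    (tstar : ℝ) (htstar : tstar = (1 / lam) * Real.log (a * b / (Tq * (a - b)))) :
    b < a ∧ 0 < Tq * (a - b) ∧ Tq * (a - b) < a * b ∧
    0 < tstar ∧ Tp tstar * Tm tstar = Tq ^ 2 ∧
    ∀ t > (0:ℝ), Tp t * Tm t = Tq ^ 2 → t = tstar := by
  have hTq : 0 < Tq := lt_trans hT0m hTm
  have hT0p : 0 < T0p := lt_trans hTq hTp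
  have ha0 : 0 < a := by rw [ha]; linarith
  have hb0 : 0 < b := by rw [hb]; linarith
  set L := Real.log T0p - Real.log T0m with hLdef
  have hL : T0p - T0m = Tq * L := by rw [hLdef]; linarith [heq]
  have hxgt : (1:ℝ) < T0p / T0m := (one_lt_div hT0m).mpr (by linarith)
  have hlogdiv : Real.log (T0p / T0m) = L := Real.log_div (ne_of_gt hT0p) (ne_of_gt hT0m)
  -- key1 : 2*Tq < T0p + T0m
  have hB := lemB _ hxgt
  rw [hlogdiv] at hB
  have hsum : 0 < T0p + T0m := by linarith
  have hfrac : (T0p / T0m - 1)/(T0p / T0m + 1) = (T0p - T0m)/(T0p + T0m) := by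
    have h0 : T0m ≠ 0 := ne_of_gt hT0m
    rw [div_eq_div_iff (by positivity) (ne_of_gt hsum)]
    field_simp
  have key1 : 2 * Tq < T0p + T0m := by
    rw [mul_div_assoc, hfrac, ← mul_div_assoc] at hB
    have hB2 : 2 * (T0p - T0m) < L * (T0p + T0m) := (div_lt_iff₀ hsum).mp hB
    nlinarith [hL, hB2, hTq, sub_pos.mpr hTm]
  -- key2 : T0p * T0m < Tq ^ 2
  set y := Real.sqrt (T0p / T0m) with hydef
  have hy2 : y ^ 2 = T0p / T0m := Real.sq_sqrt (le_of_lt (by positivity))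
  have hy1 : 1 < y := by
    rw [hydef]
    have := Real.sqrt_lt_sqrt (by norm_num) hxgt
    simpa using this
  have hy0 : 0 < y := by linarith
  clear_value y
  have hA := lemA _ hy1
  have hlogy : L = 2 * Real.log y := by
    rw [← hlogdiv, ← hy2, Real.log_pow]; push_cast; ring
  have hLlt : L < y - 1/y := by rw [hlogy]; exact hA
  have hT0my : T0m * y < Tq := by
    have h1 : T0m * (y^2 - 1) = Tq * L := by
      have : T0m * (y^2) = T0p := by
        rw [hy2]; field_simp
      linarith [hL, this]
    have h2 : Tq * L < Tq * (y - 1/y) := by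
      exact mul_lt_mul_of_pos_left hLlt hTq
    have h3 : T0m * (y^2 - 1) < Tq * ((y^2 - 1)/y) := by
      rw [h1]
      have : y - 1/y = (y^2-1)/y := by field_simp
      rw [← this]; exact h2
    have hy21 : 0 < y^2 - 1 := by nlinarith
    have h4 : T0m * (y^2-1) * y < Tq * (y^2-1) := by
      have h := mul_lt_mul_of_pos_right h3 hy0
      have hcanc : Tq * ((y^2-1)/y) * y = Tq * (y^2-1) := by
        field_simp
      linarith [h, hcanc.le, hcanc.ge]
    nlinarith [h4, hy21]
  have key2 : T0p * T0m < Tq ^ 2 := by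
    have h5 : (T0m * y)^2 < Tq ^ 2 := by
      apply pow_lt_pow_left₀ hT0my (by positivity)
      norm_num
    have h6 : (T0m * y)^2 = T0p * T0m := by
      rw [mul_pow, hy2]
      field_simp
    linarith [h5, h6]
  -- main conjuncts
  have c1 : b < a := by rw [ha, hb]; linarith
  have c2 : 0 < Tq * (a - b) := mul_pos hTq (by linarith)
  have c3 : Tq * (a - b) < a * b := by
    have : a*b - Tq*(a-b) = Tq^2 - T0p*T0m := by rw [ha, hb]; ring
    linarith
  have hr1 : (1:ℝ) < a * b / (Tq * (a - b)) := (one_lt_div c2).mpr c3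
  have c4 : 0 < tstar := by
    rw [htstar]
    exact mul_pos (by positivity) (Real.log_pos hr1)
  have hE : Real.exp (-lam * tstar) = Tq * (a - b) / (a * b) := by
    rw [htstar]
    have : -lam * ((1/lam) * Real.log (a * b / (Tq * (a - b))))
        = - Real.log (a * b / (Tq * (a - b))) := by
      field_simp
    rw [this, Real.exp_neg, Real.exp_log (by positivity), inv_div]
  have c5 : Tp tstar * Tm tstar = Tq ^ 2 := by
    rw [hTpdef, hTmdef, hE, ← ha]
    have hmb : T0m - Tq = -b := by rw [hb]; ring
    rw [hmb]
    field_simp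
    ring
  refine ⟨c1, c2, c3, c4, c5, ?_⟩
  intro t ht hprod
  rw [hTpdef, hTmdef, ← ha] at hprod
  have hmb : T0m - Tq = -b := by rw [hb]; ring
  rw [hmb] at hprod
  set E := Real.exp (-lam * t) with hEdef
  have hE0 : 0 < E := Real.exp_pos _
  have hfact : E * (Tq * (a - b) - a * b * E) = 0 := by nlinarith [hprod]
  have hzero : Tq * (a - b) - a * b * E = 0 := by
    rcases mul_eq_zero.mp hfact with h | h
    · exact absurd h (ne_of_gt hE0)
    · exact h
  have hEval : E = Tq * (a - b) / (a * b) := by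
    have hab : (0:ℝ) < a * b := mul_pos ha0 hb0
    field_simp
    linarith [hzero]
  have : Real.exp (-lam * t) = Real.exp (-lam * tstar) := by rw [hE, ← hEdef, hEval]
  have h := Real.exp_eq_exp.mp this
  have h2 : lam * t = lam * tstar := by linarith [h]
  exact mul_left_cancel₀ (ne_of_gt hlam) h2
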